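/- arXiv:2509.07948 — 3 statements merged into one kernel-verified Lean document; each statement's English description precedes it below -/
import Mathlib

section
/- For every natural number n and every element q of a commutative ring, the sum over all permutations σ of {1,…,n} of q raised to the number of inversions of σ equals the q-factorial, i.e. ∑_{σ ∈ S_n} q^{inv(σ)} = ∏_{k=1}^{n} (1 + q + q² + ⋯ + q^{k-1}). -/
/-- The number of inversions of a permutation of `Fin n`: the number of pairs `(i,j)` with
`i < j` and `σ i > σ j`. -/
def inversions {n : ℕ} (σ : Equiv.Perm (Fin n)) : ℕ :=
  (Finset.univ.filter fun p : Fin n × Fin n => p.1 < p.2 ∧ σ p.2 < σ p.1).card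

/-- Insert a value `p` at position `0` of a permutation of `Fin n`, shifting values. -/
def insertPerm {n : ℕ} (p : Fin (n + 1)) (e : Equiv.Perm (Fin n)) : Equiv.Perm (Fin (n + 1)) :=
  ((finSuccEquiv n).trans e.optionCongr).trans (finSuccEquiv' p).symm

@[simp] lemma insertPerm_zero {n : ℕ} (p : Fin (n + 1)) (e : Equiv.Perm (Fin n)) :
    insertPerm p e 0 = p := by
  simp [insertPerm, finSuccEquiv_zero, finSuccEquiv'_symm_none]

@[simp] lemma insertPerm_succ {n : ℕ} (p : Fin (n + 1)) (e : Equiv.Perm (Fin n)) (x : Fin n) :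
    insertPerm p e x.succ = p.succAbove (e x) := by
  simp [insertPerm, finSuccEquiv_succ, finSuccEquiv'_symm_some]

lemma insertPerm_injective {n : ℕ} :
    Function.Injective (fun pe : Fin (n + 1) × Equiv.Perm (Fin n) =>
      insertPerm pe.1 pe.2) := by
  rintro ⟨p, e⟩ ⟨p', e'⟩ h
  simp only at h
  have hp : p = p' := by
    have := congrArg (fun σ : Equiv.Perm (Fin (n+1)) => σ 0) h
    simpa using this
  subst hp
  have he : e = e' := by
    apply Equiv.ext
    intro x
    have := congrArg (fun σ : Equiv.Perm (Fin (n+1)) => σ x.succ) h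
    simp only [insertPerm_succ] at this
    exact Fin.succAbove_right_injective this
  simp [he]

lemma insertPerm_bijective {n : ℕ} :
    Function.Bijective (fun pe : Fin (n + 1) × Equiv.Perm (Fin n) =>
      insertPerm pe.1 pe.2) := by
  rw [Fintype.bijective_iff_injective_and_card]
  refine ⟨insertPerm_injective, ?_⟩
  simp [Fintype.card_perm, Nat.factorial_succ]

lemma card_lt_filter {n : ℕ} (p : Fin (n + 1)) :
    (Finset.univ.filter fun y : Fin n => (y : ℕ) < (p : ℕ)).card = (p : ℕ) := by
  have hle : (p : ℕ) ≤ n := Fin.is_le p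
  have : (Finset.univ.filter fun y : Fin n => (y : ℕ) < (p : ℕ)) =
      Finset.univ.map (Fin.castLEEmb hle) := by
    ext y
    simp only [Finset.mem_filter, Finset.mem_univ, true_and, Finset.mem_map]
    constructor
    · intro hy
      exact ⟨⟨y, hy⟩, by simp⟩
    · rintro ⟨z, -, rfl⟩
      simpa using z.2
  rw [this, Finset.card_map, Finset.card_univ, Fintype.card_fin]

lemma inversions_insertPerm {n : ℕ} (p : Fin (n + 1)) (e : Equiv.Perm (Fin n)) :
    inversions (insertPerm p e) = (p : ℕ) + inversions e := by
  set σ := insertPerm p e with hσ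
  have hA : ∀ x : Fin n, σ x.succ < p ↔ (e x : ℕ) < (p : ℕ) := by
    intro x
    rw [hσ, insertPerm_succ, Fin.succAbove_lt_iff_castSucc_lt]
    simp [Fin.lt_def]
  have hsplit :
      (Finset.univ.filter fun q : Fin (n+1) × Fin (n+1) => q.1 < q.2 ∧ σ q.2 < σ q.1) =
        ((Finset.univ.filter fun x : Fin n => (e x : ℕ) < (p : ℕ)).image
            fun x => ((0 : Fin (n+1)), x.succ)) ∪
        ((Finset.univ.filter fun q : Fin n × Fin n => q.1 < q.2 ∧ e q.2 < e q.1).image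
            fun q => (q.1.succ, q.2.succ)) := by
    ext ⟨i, j⟩
    simp only [Finset.mem_filter, Finset.mem_univ, true_and, Finset.mem_union,
      Finset.mem_image, Prod.mk.injEq, Prod.exists]
    induction i using Fin.cases with
    | zero =>
      induction j using Fin.cases with
      | zero => simp [Fin.succ_ne_zero, (Fin.succ_ne_zero _).symm]
      | succ y =>
        simp only [hσ, insertPerm_zero, insertPerm_succ, Fin.succ_pos, true_and,
          Fin.succAbove_lt_iff_castSucc_lt]
        constructor
        · intro h2
          exact Or.inl ⟨y, by simpa [Fin.lt_def] using h2, rfl⟩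
        · rintro (⟨x, hx, hxy⟩ | ⟨a, b, -, hab, -⟩)
          · obtain rfl : x = y := Fin.succ_injective _ hxy
            simpa [Fin.lt_def] using hx
          · exact absurd hab (Fin.succ_ne_zero a)
    | succ x =>
      induction j using Fin.cases with
      | zero =>
        simp only [Fin.succ_ne_zero, false_and, and_false, exists_false, or_false,
          iff_false, not_and]
        intro h
        exact absurd h (Fin.not_lt_zero _)
      | succ y =>
        rw [hσ]
        simp only [insertPerm_succ, Fin.succ_lt_succ_iff, Fin.succAbove_lt_succAbove_iff]
        constructor
        · rintro ⟨h1, h2⟩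
          exact Or.inr ⟨x, y, ⟨h1, h2⟩, rfl, rfl⟩
        · rintro (⟨z, -, hz, -⟩ | ⟨a, b, ⟨h1, h2⟩, ha, hb⟩)
          · exact absurd hz.symm (Fin.succ_ne_zero x)
          · obtain rfl : a = x := Fin.succ_injective _ ha
            obtain rfl : b = y := Fin.succ_injective _ hb
            exact ⟨h1, h2⟩
  have hcard : (Finset.univ.filter fun x : Fin n => (e x : ℕ) < (p : ℕ)).card = (p : ℕ) := by
    have himg : (Finset.univ.filter fun x : Fin n => (e x : ℕ) < (p : ℕ)).image e =
        Finset.univ.filter fun y : Fin n => (y : ℕ) < (p : ℕ) := by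
      ext y
      simp only [Finset.mem_image, Finset.mem_filter, Finset.mem_univ, true_and]
      constructor
      · rintro ⟨x, hx, rfl⟩; exact hx
      · intro hy; exact ⟨e.symm y, by simpa using hy, by simp⟩
    rw [← Finset.card_image_of_injective _ e.injective, himg, card_lt_filter]
  rw [inversions, hsplit, Finset.card_union_of_disjoint, Finset.card_image_of_injective,
    Finset.card_image_of_injective, hcard, inversions]
  · exact fun a b h => Prod.ext (Fin.succ_injective _ (congrArg Prod.fst h))
      (Fin.succ_injective _ (congrArg Prod.snd h))
  · exact fun a b h => Fin.succ_injective _ (congrArg Prod.snd h)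
  · rw [Finset.disjoint_left]
    rintro ⟨i, j⟩ h1 h2
    simp only [Finset.mem_image, Prod.mk.injEq, Prod.exists] at h1 h2
    obtain ⟨x, -, hx, -⟩ := h1
    obtain ⟨a, b, -, ha, -⟩ := h2
    rw [← hx] at ha
    exact Fin.succ_ne_zero a ha

/-- The sum over all permutations of `q` to the inversion number equals the `q`-factorial
`∏_{k=1}^{n} (1 + q + ⋯ + q^{k-1})`. -/
theorem sum_q_pow_inversions_eq_qFactorial {R : Type*} [CommRing R] (q : R) (n : ℕ) :
    ∑ σ : Equiv.Perm (Fin n), q ^ inversions σ =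
      ∏ k ∈ Finset.range n, ∑ j ∈ Finset.range (k + 1), q ^ j := by
  induction n with
  | zero =>
    simp [inversions]
  | succ n ih =>
    rw [← Fintype.sum_bijective _ (insertPerm_bijective (n := n))
      (fun pe => q ^ inversions (insertPerm pe.1 pe.2)) _ (fun pe => rfl)]
    rw [Fintype.sum_prod_type]
    simp only [inversions_insertPerm, pow_add]
    rw [Finset.prod_range_succ, ← ih]
    rw [← Finset.sum_mul_sum]
    rw [mul_comm]
    congr 1
    exact Fin.sum_univ_eq_sum_range (fun j => q ^ j) (n+1)
end

section
/- For every real number q with |q| < 1 and every natural number n, the sum over all permutations σ of {1,…,n} of |q|^{inv(σ)} is at most (1−|q|)^{-n}. -/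
open Finset

/-- The Lehmer code of a permutation. -/
def lehmer {n : ℕ} (σ : Equiv.Perm (Fin n)) (i : Fin n) : ℕ :=
  (Finset.univ.filter fun j : Fin n => i < j ∧ σ j < σ i).card

lemma inversions_eq_sum_lehmer {n : ℕ} (σ : Equiv.Perm (Fin n)) :
    inversions σ = ∑ i, lehmer σ i := by
  unfold inversions lehmer
  rw [Finset.card_filter, Fintype.sum_prod_type]
  exact Finset.sum_congr rfl fun i _ => (Finset.card_filter _ _).symm

lemma lehmer_lt {n : ℕ} (σ : Equiv.Perm (Fin n)) (i : Fin n) : lehmer σ i < n := by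
  have hsub : (Finset.univ.filter fun j : Fin n => i < j ∧ σ j < σ i) ⊆
      Finset.univ.erase i := by
    intro j hj
    simp only [Finset.mem_filter] at hj
    exact Finset.mem_erase.2 ⟨ne_of_gt hj.2.1, Finset.mem_univ j⟩
  calc lehmer σ i ≤ (Finset.univ.erase i).card := Finset.card_le_card hsub
    _ = n - 1 := by rw [Finset.card_erase_of_mem (Finset.mem_univ i), Finset.card_univ,
        Fintype.card_fin]
    _ < n := Nat.sub_lt i.pos one_pos

lemma eq_of_card_filter_lt_eq {n : ℕ} {S : Finset (Fin n)} {a b : Fin n}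
    (ha : a ∈ S) (hb : b ∈ S)
    (h : (S.filter (· < a)).card = (S.filter (· < b)).card) : a = b := by
  by_contra hne
  wlog hab : a < b generalizing a b
  · exact this hb ha h.symm (Ne.symm hne) ((lt_or_gt_of_ne hne).resolve_left hab)
  have hss : S.filter (· < a) ⊂ S.filter (· < b) := by
    refine ⟨fun x hx => ?_, fun hsub => ?_⟩
    · simp only [Finset.mem_filter] at hx ⊢
      exact ⟨hx.1, lt_trans hx.2 hab⟩
    have : a ∈ S.filter (· < a) := hsub (Finset.mem_filter.2 ⟨ha, hab⟩)
    exact absurd (Finset.mem_filter.1 this).2 (lt_irrefl a)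
  exact absurd h (Nat.ne_of_lt (Finset.card_lt_card hss))

/-- The image of `σ` restricted to indices `≥ i`. -/
def remaining {n : ℕ} (σ : Equiv.Perm (Fin n)) (i : Fin n) : Finset (Fin n) :=
  (Finset.univ.filter fun j : Fin n => i ≤ j).image σ

lemma mem_remaining {n : ℕ} (σ : Equiv.Perm (Fin n)) (i : Fin n) (x : Fin n) :
    x ∈ remaining σ i ↔ i ≤ σ.symm x := by
  simp only [remaining, Finset.mem_image, Finset.mem_filter, Finset.mem_univ, true_and]
  constructor
  · rintro ⟨j, hj, rfl⟩; simpa using hj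
  · intro h; exact ⟨σ.symm x, h, σ.apply_symm_apply x⟩

lemma lehmer_eq_card_remaining {n : ℕ} (σ : Equiv.Perm (Fin n)) (i : Fin n) :
    lehmer σ i = ((remaining σ i).filter (· < σ i)).card := by
  unfold lehmer
  rw [← Finset.card_image_of_injective _ σ.injective]
  congr 1
  ext x
  simp only [Finset.mem_image, Finset.mem_filter, Finset.mem_univ, true_and,
    mem_remaining]
  constructor
  · rintro ⟨j, ⟨hij, hlt⟩, rfl⟩
    exact ⟨by simpa using hij.le, hlt⟩
  · rintro ⟨hle, hlt⟩
    refine ⟨σ.symm x, ⟨lt_of_le_of_ne hle ?_, by simpa using hlt⟩, σ.apply_symm_apply x⟩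
    intro hcon
    rw [hcon, σ.apply_symm_apply] at hlt
    exact absurd hlt (lt_irrefl x)

lemma lehmer_injective {n : ℕ} : Function.Injective (lehmer (n := n)) := by
  intro σ τ h
  have key : ∀ m : ℕ, ∀ i : Fin n, i.val = m → σ i = τ i := by
    intro m
    induction m using Nat.strong_induction_on with
    | _ m ih =>
      intro i him
      have hprev : ∀ j : Fin n, j < i → σ j = τ j := fun j hj =>
        ih j.val (him ▸ hj) j rfl
      have hrem : remaining σ i = remaining τ i := by
        ext x
        rw [mem_remaining, mem_remaining]
        constructor
        · intro hx
          by_contra hcon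
          push_neg at hcon
          have h1 : τ (τ.symm x) = σ (τ.symm x) := (hprev _ hcon).symm
          rw [τ.apply_symm_apply] at h1
          have : σ.symm x = τ.symm x := by rw [Equiv.symm_apply_eq]; exact h1
          rw [this] at hx
          exact absurd hcon (not_lt_of_ge hx)
        · intro hx
          by_contra hcon
          push_neg at hcon
          have h1 : σ (σ.symm x) = τ (σ.symm x) := hprev _ hcon
          rw [σ.apply_symm_apply] at h1
          have : τ.symm x = σ.symm x := by rw [Equiv.symm_apply_eq]; exact h1
          rw [this] at hx
          exact absurd hcon (not_lt_of_ge hx)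
      have hσ : σ i ∈ remaining σ i := (mem_remaining σ i _).2 (by simp)
      have hτ : τ i ∈ remaining σ i := hrem ▸ (mem_remaining τ i _).2 (by simp)
      have hc : ((remaining σ i).filter (· < σ i)).card =
          ((remaining σ i).filter (· < τ i)).card := by
        rw [← lehmer_eq_card_remaining, h, lehmer_eq_card_remaining, hrem]
      exact eq_of_card_filter_lt_eq hσ hτ hc
  exact Equiv.ext fun i => key i.val i rfl

/-- For `|q| < 1`, the `|q|`-weighted count of permutations by inversion number is bounded by
`(1 - |q|)⁻¹ ^ n`; this is the operator norm bound `‖P_q|_{H^{⊗n}}‖ ≤ D_q^n`. -/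
theorem sum_abs_q_pow_inversions_le (q : ℝ) (hq : |q| < 1) (n : ℕ) :
    ∑ σ : Equiv.Perm (Fin n), |q| ^ inversions σ ≤ ((1 - |q|)⁻¹) ^ n := by
  set r := |q| with hr
  have hr0 : 0 ≤ r := abs_nonneg q
  have hr1 : r < 1 := hq
  have h1r : 0 < 1 - r := by linarith
  -- geometric sum bound
  have hgeom : ∑ x : Fin n, r ^ (x : ℕ) ≤ (1 - r)⁻¹ := by
    rw [Fin.sum_univ_eq_sum_range (fun k => r ^ k) n, geom_sum_eq hr1.ne n]
    rw [show (r ^ n - 1) / (r - 1) = (1 - r ^ n) / (1 - r) by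
      rw [← neg_div_neg_eq]; ring_nf]
    rw [inv_eq_one_div]
    have hpn : (0 : ℝ) ≤ r ^ n := pow_nonneg hr0 n
    gcongr
    linarith
  -- the Fin-valued Lehmer code
  let codeF : Equiv.Perm (Fin n) → (Fin n → Fin n) := fun σ i => ⟨lehmer σ i, lehmer_lt σ i⟩
  have hcodeF_inj : Function.Injective codeF := by
    intro σ τ hστ
    apply lehmer_injective
    funext i
    exact congrArg Fin.val (congrFun hστ i)
  calc ∑ σ : Equiv.Perm (Fin n), r ^ inversions σ
      = ∑ σ : Equiv.Perm (Fin n), ∏ i, r ^ ((codeF σ i : ℕ)) := by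
        refine Finset.sum_congr rfl fun σ _ => ?_
        rw [inversions_eq_sum_lehmer, ← Finset.prod_pow_eq_pow_sum]
    _ = ∑ c ∈ Finset.univ.image codeF, ∏ i, r ^ ((c i : ℕ)) := by
        rw [Finset.sum_image (fun x _ y _ h => hcodeF_inj h)]
    _ ≤ ∑ c : Fin n → Fin n, ∏ i, r ^ ((c i : ℕ)) := by
        apply Finset.sum_le_sum_of_subset_of_nonneg (Finset.subset_univ _)
        intro c _ _
        exact Finset.prod_nonneg fun i _ => pow_nonneg hr0 _
    _ = ∏ i : Fin n, ∑ x : Fin n, r ^ (x : ℕ) := by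
        rw [Finset.prod_univ_sum]
        rw [Fintype.piFinset_univ]
    _ ≤ ∏ _i : Fin n, (1 - r)⁻¹ := by
        apply Finset.prod_le_prod
        · intro i _; exact Finset.sum_nonneg fun x _ => pow_nonneg hr0 _
        · intro i _; exact hgeom
    _ = ((1 - r)⁻¹) ^ n := by rw [Finset.prod_const, Finset.card_univ, Fintype.card_fin]
end

section
/- Let π be a partial pairing of {1,…,n}, i.e. a finite set of ordered pairs (s,t) with 1 ≤ s < t ≤ n whose underlying two-element sets are pairwise disjoint, and define cr(π) = #{((i,j),(k,l)) ∈ π × π : i < k < j < l}, sep(π) = ∑_{(s,t)∈π} #{u : s ≤ u ≤ t, u not covered by π}, and crb(π) = cr(π) + sep(π). If j ∈ {1,…,n} is not covered by π, then crb(π ∪ {(j, n+1)}) = crb(π) + #{u : j < u ≤ n, u not covered by π}, where on the left π ∪ {(j,n+1)} is regarded as a partial pairing of {1,…,n+1}. -/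
/-- A point `u` is covered by the partial pairing `π` if it occurs as a coordinate of some
pair of `π`. -/
def Covered (π : Finset (ℕ × ℕ)) (u : ℕ) : Prop :=
  ∃ p ∈ π, u = p.1 ∨ u = p.2

instance (π : Finset (ℕ × ℕ)) (u : ℕ) : Decidable (Covered π u) :=
  decidable_of_iff (∃ p ∈ π, u = p.1 ∨ u = p.2) Iff.rfl

/-- The crossing number `cr(π) = #{((i,j),(k,l)) ∈ π × π : i < k < j < l}`. -/
def cr (π : Finset (ℕ × ℕ)) : ℕ :=
  ((π ×ˢ π).filter fun x : (ℕ × ℕ) × ℕ × ℕ =>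
    x.1.1 < x.2.1 ∧ x.2.1 < x.1.2 ∧ x.1.2 < x.2.2).card

/-- The separation number `sep(π) = ∑_{(s,t)∈π} #{u : s ≤ u ≤ t, u not covered by π}`. -/
def sep (π : Finset (ℕ × ℕ)) : ℕ :=
  ∑ p ∈ π, ((Finset.Icc p.1 p.2).filter fun u => ¬ Covered π u).card

/-- The intertwining number `crb(π) = cr(π) + sep(π)`. -/
def crb (π : Finset (ℕ × ℕ)) : ℕ := cr π + sep π

/-- If `π` is a partial pairing of `{1,…,n}` and `j ∈ {1,…,n}` is not covered by `π`, then
`crb(π ∪ {(j, n+1)}) = crb(π) + #{u : j < u ≤ n, u not covered by π}`. -/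
theorem crb_insert_pair (n : ℕ) (π : Finset (ℕ × ℕ))
    (hmem : ∀ p ∈ π, 1 ≤ p.1 ∧ p.1 < p.2 ∧ p.2 ≤ n)
    (hdisj : ∀ p ∈ π, ∀ p' ∈ π, p ≠ p' →
      p.1 ≠ p'.1 ∧ p.1 ≠ p'.2 ∧ p.2 ≠ p'.1 ∧ p.2 ≠ p'.2)
    (j : ℕ) (hj1 : 1 ≤ j) (hjn : j ≤ n) (hfree : ¬ Covered π j) :
    crb (insert (j, n + 1) π) =
      crb π + ((Finset.Icc (j + 1) n).filter fun u => ¬ Covered π u).card := by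
  classical
  have hPnot : (j, n + 1) ∉ π := by
    intro h
    have := (hmem _ h).2.2
    omega
  have hcov : ∀ u, Covered (insert (j, n + 1) π) u ↔ u = j ∨ u = n + 1 ∨ Covered π u := by
    intro u
    simp only [Covered, Finset.mem_insert]
    constructor
    · rintro ⟨p, hp | hp, h⟩
      · subst hp
        rcases h with h | h
        · exact Or.inl h
        · exact Or.inr (Or.inl h)
      · exact Or.inr (Or.inr ⟨p, hp, h⟩)
    · rintro (h | h | ⟨p, hp, h⟩)
      · exact ⟨(j, n + 1), Or.inl rfl, Or.inl h⟩
      · exact ⟨(j, n + 1), Or.inl rfl, Or.inr h⟩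
      · exact ⟨p, Or.inr hp, h⟩
  have hjne : ∀ p ∈ π, j ≠ p.1 ∧ j ≠ p.2 := by
    intro p hp
    constructor <;> intro h <;> exact hfree ⟨p, hp, by tauto⟩
  have crsum : ∀ s : Finset (ℕ × ℕ), cr s =
      ∑ p ∈ s, ∑ q ∈ s, if p.1 < q.1 ∧ q.1 < p.2 ∧ p.2 < q.2 then 1 else 0 := by
    intro s
    rw [cr, Finset.card_filter, Finset.sum_product]
  set A : ℕ := ∑ p ∈ π, if p.1 < j ∧ j < p.2 then 1 else 0 with hA
  have hcr : cr (insert (j, n + 1) π) = cr π + A := by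
    rw [crsum, crsum, Finset.sum_insert hPnot]
    have h1 : (∑ q ∈ insert (j, n + 1) π,
        if (j, n + 1).1 < q.1 ∧ q.1 < (j, n + 1).2 ∧ (j, n + 1).2 < q.2 then 1 else 0) = 0 := by
      apply Finset.sum_eq_zero
      intro q hq
      rcases Finset.mem_insert.mp hq with h | h
      · subst h; simp
      · have h2 := (hmem q h).2.2
        simp only
        rw [if_neg (by omega)]
    rw [h1]
    have h2 : ∀ p ∈ π, (∑ q ∈ insert (j, n + 1) π,
        if p.1 < q.1 ∧ q.1 < p.2 ∧ p.2 < q.2 then 1 else 0)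
        = (if p.1 < j ∧ j < p.2 then 1 else 0)
          + ∑ q ∈ π, if p.1 < q.1 ∧ q.1 < p.2 ∧ p.2 < q.2 then 1 else 0 := by
      intro p hp
      rw [Finset.sum_insert hPnot]
      have h3 := (hmem p hp).2.2
      congr 1
      simp only
      by_cases hc : p.1 < j ∧ j < p.2
      · rw [if_pos ⟨hc.1, hc.2, by omega⟩, if_pos hc]
      · rw [if_neg (by omega), if_neg hc]
    rw [Finset.sum_congr rfl h2, Finset.sum_add_distrib]
    omega
  have htermP : ((Finset.Icc (j, n + 1).1 (j, n + 1).2).filter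
        fun u => ¬ Covered (insert (j, n + 1) π) u).card
      = ((Finset.Icc (j + 1) n).filter fun u => ¬ Covered π u).card := by
    congr 1
    ext u
    simp only [Finset.mem_filter, Finset.mem_Icc, hcov]
    constructor
    · rintro ⟨⟨h1, h2⟩, h3⟩
      push_neg at h3
      exact ⟨⟨by omega, by omega⟩, h3.2.2⟩
    · rintro ⟨⟨h1, h2⟩, h3⟩
      refine ⟨⟨by omega, by omega⟩, ?_⟩
      push_neg
      exact ⟨by omega, by omega, h3⟩
  have key : ∀ p ∈ π,
      ((Finset.Icc p.1 p.2).filter fun u => ¬ Covered (insert (j, n + 1) π) u).card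
        + (if p.1 < j ∧ j < p.2 then 1 else 0)
      = ((Finset.Icc p.1 p.2).filter fun u => ¬ Covered π u).card := by
    intro p hp
    have hp2 := hmem p hp
    have hne := hjne p hp
    have hset : ((Finset.Icc p.1 p.2).filter fun u => ¬ Covered (insert (j, n + 1) π) u)
        = ((Finset.Icc p.1 p.2).filter fun u => ¬ Covered π u).erase j := by
      ext u
      simp only [Finset.mem_filter, Finset.mem_erase, Finset.mem_Icc, hcov]
      constructor
      · rintro ⟨h1, h2⟩
        push_neg at h2
        exact ⟨h2.1, h1, h2.2.2⟩
      · rintro ⟨h1, ⟨h2, h2'⟩, h3⟩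
        refine ⟨⟨h2, h2'⟩, ?_⟩
        push_neg
        exact ⟨h1, by omega, h3⟩
    rw [hset]
    by_cases hc : p.1 < j ∧ j < p.2
    · have hjmem : j ∈ (Finset.Icc p.1 p.2).filter fun u => ¬ Covered π u := by
        simp only [Finset.mem_filter, Finset.mem_Icc]
        exact ⟨⟨by omega, by omega⟩, hfree⟩
      rw [Finset.card_erase_of_mem hjmem, if_pos hc]
      have hpos : 0 < ((Finset.Icc p.1 p.2).filter fun u => ¬ Covered π u).card :=
        Finset.card_pos.mpr ⟨j, hjmem⟩
      omega
    · have hjnot : j ∉ (Finset.Icc p.1 p.2).filter fun u => ¬ Covered π u := by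
        simp only [Finset.mem_filter, Finset.mem_Icc]
        rintro ⟨⟨h1, h2⟩, -⟩
        have e1 := hne.1
        have e2 := hne.2
        omega
      rw [Finset.erase_eq_of_notMem hjnot, if_neg hc, add_zero]
  have hsep : sep (insert (j, n + 1) π)
      = ((Finset.Icc (j + 1) n).filter fun u => ¬ Covered π u).card
        + ∑ p ∈ π, ((Finset.Icc p.1 p.2).filter fun u => ¬ Covered (insert (j, n + 1) π) u).card := by
    rw [sep, Finset.sum_insert hPnot, htermP]
  have hs : (∑ p ∈ π, ((Finset.Icc p.1 p.2).filter
        fun u => ¬ Covered (insert (j, n + 1) π) u).card) + A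
      = ∑ p ∈ π, ((Finset.Icc p.1 p.2).filter fun u => ¬ Covered π u).card := by
    rw [hA, ← Finset.sum_add_distrib]
    exact Finset.sum_congr rfl key
  have hsepπ : sep π = ∑ p ∈ π, ((Finset.Icc p.1 p.2).filter fun u => ¬ Covered π u).card := rfl
  rw [crb, crb, hcr, hsep, hsepπ]
  omega
end
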